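/- If X is a regular Hausdorff sequential topological space in which every point has a countably compact neighborhood, then X × Y is sequential for every metrizable topological space Y. -/

import Mathlib

open Filter Topology

universe u

/-- A subset is countably compact if every countable open cover has a finite subcover. -/
def CountablyCompactSet {X : Type*} [TopologicalSpace X] (K : Set X) : Prop :=
  ∀ U : ℕ → Set X, (∀ n, IsOpen (U n)) → K ⊆ ⋃ n, U n →
    ∃ t : Finset ℕ, K ⊆ ⋃ n ∈ t, U n

/-- In a T2 sequential space, every sequence in a countably compact set has a
subsequence converging to some point of the space. -/
lemma aux_seq_compact {X : Type*} [TopologicalSpace X] [T2Space X] [SequentialSpace X]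
    {K : Set X} (hK : CountablyCompactSet K) (u : ℕ → X) (hu : ∀ n, u n ∈ K) :
    ∃ φ : ℕ → ℕ, StrictMono φ ∧ ∃ p, Tendsto (u ∘ φ) atTop (𝓝 p) := by
  by_contra H
  push_neg at H
  -- Every fiber of u is finite
  have hfib : ∀ c : X, {n | u n = c}.Finite := by
    intro c
    by_contra hinf
    have hfr : ∃ᶠ n in atTop, u n = c := by
      rw [← Nat.cofinite_eq_atTop]
      exact Filter.frequently_cofinite_iff_infinite.mpr hinf
    obtain ⟨φ, hφ, hφc⟩ := extraction_of_frequently_atTop hfr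
    refine H φ hφ c ?_
    have : (u ∘ φ) = fun _ => c := funext fun n => hφc n
    rw [this]
    exact tendsto_const_nhds
  -- Each tail image u '' Ici n is sequentially closed, hence closed
  have hTclosed : ∀ n : ℕ, IsClosed (u '' Set.Ici n) := by
    intro n
    apply IsSeqClosed.isClosed
    intro v z hv hvz
    choose g hg hgu using hv
    -- Case 1: some value of v occurs infinitely often
    by_cases hcase : ∃ c : X, {k | v k = c}.Infinite
    · obtain ⟨c, hc⟩ := hcase
      have hfr : ∃ᶠ k in atTop, v k = c := by
        rw [← Nat.cofinite_eq_atTop]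
        exact Filter.frequently_cofinite_iff_infinite.mpr hc
      obtain ⟨φ, hφ, hφc⟩ := extraction_of_frequently_atTop hfr
      have h1 : Tendsto (v ∘ φ) atTop (𝓝 z) := hvz.comp hφ.tendsto_atTop
      have h2 : Tendsto (v ∘ φ) atTop (𝓝 c) := by
        have : (v ∘ φ) = fun _ => c := funext fun k => hφc k
        rw [this]; exact tendsto_const_nhds
      have hzc : z = c := tendsto_nhds_unique h1 h2
      obtain ⟨k, hk⟩ := hc.nonempty
      rw [hzc, ← hk]
      exact ⟨g k, hg k, hgu k⟩
    · -- Case 2: all fibers of v are finite; build a subsequence, contradicting H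
      push_neg at hcase
      exfalso
      -- g tends to infinity: {k | g k ≤ B} is finite for each B
      have hgB : ∀ B : ℕ, {k | g k ≤ B}.Finite := by
        intro B
        by_contra hinf
        haveI : Infinite {k | g k ≤ B} := Set.infinite_coe_iff.mpr hinf
        haveI : Finite ↥(u '' Set.Iic B) := ((Set.finite_Iic B).image u).to_subtype
        obtain ⟨c, hc⟩ := Finite.exists_infinite_fiber
          (fun k : {k | g k ≤ B} => (⟨v k, ⟨g k.1, k.2, hgu k.1⟩⟩ : ↥(u '' Set.Iic B)))
        have hinfc : {k : ℕ | v k = (c : X)}.Infinite := by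
          rw [← Set.infinite_coe_iff]
          refine @Infinite.of_injective _ _ hc
            (fun a => ⟨a.1.1, ?_⟩) ?_
          · have : (⟨v a.1, ⟨g a.1.1, a.1.2, hgu a.1.1⟩⟩ : ↥(u '' Set.Iic B)) = c := a.2
            exact congrArg Subtype.val this
          · intro a b hab
            simp only [Subtype.mk.injEq] at hab
            exact Subtype.ext (Subtype.ext hab)
        exact hinfc (hcase c)
      have hgtop : Tendsto g atTop atTop := by
        rw [tendsto_atTop]
        intro b
        rw [← Nat.cofinite_eq_atTop, eventually_cofinite]
        exact (hgB b).subset fun k hk => le_of_lt (not_le.mp hk)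
      obtain ⟨ψ, hψ, hgψ⟩ := strictMono_subseq_of_tendsto_atTop hgtop
      refine H (g ∘ ψ) hgψ z ?_
      have heq : u ∘ (g ∘ ψ) = v ∘ ψ := funext fun k => hgu (ψ k)
      rw [heq]
      exact hvz.comp hψ.tendsto_atTop
  -- Use countable compactness with the complements of the tails
  have hTcover : K ⊆ ⋃ n, (u '' Set.Ici n)ᶜ := by
    intro x _
    simp only [Set.mem_iUnion, Set.mem_compl_iff]
    by_contra hx
    push_neg at hx
    have hinfx : {n | u n = x}.Infinite := by
      rw [← Filter.frequently_cofinite_iff_infinite, Nat.cofinite_eq_atTop,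
        frequently_atTop]
      intro N
      obtain ⟨m, hm, hmx⟩ := hx N
      exact ⟨m, hm, hmx⟩
    exact hinfx (hfib x)
  obtain ⟨t, ht⟩ := hK (fun n => (u '' Set.Ici n)ᶜ)
    (fun n => (hTclosed n).isOpen_compl) hTcover
  set N : ℕ := t.sup id with hN
  obtain ⟨n, hn, hun⟩ := Set.mem_iUnion₂.mp (ht (hu N))
  exact hun ⟨N, Finset.le_sup (f := id) hn, rfl⟩

/-- A regular Hausdorff sequential space in which every point has a countably compact
neighborhood has sequential product with every metrizable space. -/
theorem stmt15 {X : Type u} [TopologicalSpace X] [T2Space X] [RegularSpace X]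
    [SequentialSpace X] (h : ∀ x : X, ∃ K ∈ 𝓝 x, CountablyCompactSet K) :
    ∀ (Y : Type u) [TopologicalSpace Y], TopologicalSpace.MetrizableSpace Y →
      SequentialSpace (X × Y) := by
  intro Y _ hY
  haveI := hY
  constructor
  intro A hA
  rw [← isOpen_compl_iff, isOpen_iff_mem_nhds]
  rintro ⟨x, y⟩ hxy
  obtain ⟨K, hKnhds, hKc⟩ := h x
  -- The slice C = {x' | (x', y) ∈ A} is sequentially closed, hence closed
  set C : Set X := {x' | (x', y) ∈ A} with hC
  have hCclosed : IsClosed C := by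
    apply IsSeqClosed.isClosed
    intro v z hv hvz
    exact hA (x := fun n => (v n, y)) (fun n => hv n)
      (hvz.prodMk_nhds tendsto_const_nhds)
  have hxC : x ∉ C := hxy
  -- Get a closed neighborhood S of x inside K ∩ Cᶜ
  have hmem : K ∩ Cᶜ ∈ 𝓝 x :=
    Filter.inter_mem hKnhds (hCclosed.isOpen_compl.mem_nhds hxC)
  obtain ⟨S, ⟨hSnhds, hSclosed⟩, hSsub⟩ := (closed_nhds_basis x).mem_iff.mp hmem
  -- A countable antitone basis at y (Y is metrizable, hence first countable)
  obtain ⟨B, hB⟩ := (𝓝 y).exists_antitone_basis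
  -- It suffices to find n with (interior S ×ˢ B n) ∩ A = ∅
  by_contra hcontra
  have hstep : ∀ n : ℕ, ∃ p : X × Y, p ∈ A ∧ p.1 ∈ interior S ∧ p.2 ∈ B n := by
    intro n
    by_contra hempty
    push_neg at hempty
    apply hcontra
    have hnn : (interior S ×ˢ B n : Set (X × Y)) ∈ 𝓝 (x, y) :=
      prod_mem_nhds (interior_mem_nhds.mpr hSnhds) (hB.toHasBasis.mem_of_mem trivial)
    refine Filter.mem_of_superset hnn ?_
    rintro ⟨a, b⟩ ⟨ha, hb⟩ hab
    exact hempty (a, b) hab ha hb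
  choose p hpA hpS hpB using hstep
  -- Apply the subsequence lemma to the first coordinates
  have hpK : ∀ n, (p n).1 ∈ K := fun n => (hSsub (interior_subset (hpS n))).1
  obtain ⟨φ, hφ, x', hx'⟩ := aux_seq_compact hKc (fun n => (p n).1) hpK
  -- second coordinates tend to y
  have hy2 : Tendsto (fun n => (p n).2) atTop (𝓝 y) := hB.tendsto hpB
  have hy2' : Tendsto (fun k => (p (φ k)).2) atTop (𝓝 y) := hy2.comp hφ.tendsto_atTop
  -- the pairs converge to (x', y), which then lies in A
  have hlim : Tendsto (fun k => p (φ k)) atTop (𝓝 (x', y)) :=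
    hx'.prodMk_nhds hy2'
  have hx'A : (x', y) ∈ A := hA (fun k => hpA (φ k)) hlim
  -- but x' ∈ S since S is closed and the subsequence lies in S
  have hx'S : x' ∈ S := hSclosed.mem_of_tendsto hx'
    (Filter.Eventually.of_forall fun k => interior_subset (hpS (φ k)))
  exact (hSsub hx'S).2 hx'A
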